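/- arXiv:2312.02943 — 9 statements merged into one kernel-verified Lean document; each statement's English description precedes it below -/
import Mathlib

section
/- Let γ ∈ (0,1)∪(1,∞), θ, σ_y, μ_y ∈ ℝ, and ρ, r, m > 0 with ρ + m > (1-γ)r + ((1-γ)/(2γ))θ² (so K := (1/γ)(ρ + m − (1-γ)r − ((1-γ)/(2γ))θ²) > 0), and assume κ := r − μ_y + σ_y θ > 0, l > 0, B > 0. Define Q̂(z,y) := (γ/((1-γ)K))·z^{(γ-1)/γ} + z·y/κ + m·(lB)^{1-γ}/((1-γ)(ρ+m)) and û(z) := (γ/(1-γ))·z^{(γ-1)/γ}. Then Q̂ is twice continuously differentiable on (0,∞)², and for all z > 0, y > 0: (1/2)θ²z²·∂²Q̂/∂z² + (ρ−r+m)z·∂Q̂/∂z + (1/2)σ_y²y²·∂²Q̂/∂y² + μ_y y·∂Q̂/∂y − θσ_y z y·∂²Q̂/∂z∂y − (ρ+m)·Q̂(z,y) = −( û(z) + m·(lB)^{1-γ}/(1-γ) + z·y ). -/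
open Real Set

/-- Proposition 3.1: the explicit dual function `Q̂` is `C²` on `(0,∞)²` and solves
`−LQ̂ = û + m·u(lB) + zy`. -/
theorem stmt_5 (γ θ σy μy ρ r m κ K l B : ℝ)
    (hγ0 : 0 < γ) (hγ1 : γ ≠ 1) (hρ : 0 < ρ) (hr : 0 < r) (hm : 0 < m)
    (hassume : (1-γ)*r + ((1-γ)/(2*γ))*θ^2 < ρ + m)
    (hK : K = (1/γ) * (ρ + m - (1-γ)*r - ((1-γ)/(2*γ))*θ^2))
    (hκ : κ = r - μy + σy*θ) (hκ0 : 0 < κ) (hl : 0 < l) (hB : 0 < B)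
    (Q : ℝ → ℝ → ℝ)
    (hQ : ∀ z y : ℝ, Q z y = (γ/((1-γ)*K)) * z^((γ-1)/γ) + z*y/κ
        + m*(l*B)^(1-γ)/((1-γ)*(ρ+m))) :
    ContDiffOn ℝ 2 (fun p : ℝ × ℝ => Q p.1 p.2) (Set.Ioi 0 ×ˢ Set.Ioi 0) ∧
    ∀ z y : ℝ, 0 < z → 0 < y →
      (1/2)*θ^2*z^2 * deriv (fun z' => deriv (fun z'' => Q z'' y) z') z
      + (ρ - r + m)*z * deriv (fun z' => Q z' y) z
      + (1/2)*σy^2*y^2 * deriv (fun y' => deriv (fun y'' => Q z y'') y') y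
      + μy*y * deriv (fun y' => Q z y') y
      - θ*σy*z*y * deriv (fun y' => deriv (fun z' => Q z' y') z) y
      - (ρ+m) * Q z y
      = -((γ/(1-γ))*z^((γ-1)/γ) + m*(l*B)^(1-γ)/(1-γ) + z*y) := by
  have hγ : γ ≠ 0 := ne_of_gt hγ0
  have h1γ : (1:ℝ) - γ ≠ 0 := sub_ne_zero.mpr (Ne.symm hγ1)
  have hρm : ρ + m ≠ 0 := by positivity
  have hK0 : 0 < K := by
    rw [hK]; apply mul_pos (by positivity); linarith
  set p : ℝ := (γ-1)/γ with hp
  set A : ℝ := γ/((1-γ)*K) with hA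
  set C : ℝ := m*(l*B)^(1-γ)/((1-γ)*(ρ+m)) with hC
  -- first z-derivative
  have hd1 : ∀ (y : ℝ) {z : ℝ}, 0 < z →
      HasDerivAt (fun z'' => Q z'' y) (A*p*z^(p-1) + y/κ) z := by
    intro y z hz
    have hfun : (fun z'' => Q z'' y) = fun z'' => A * z''^p + z''*(y/κ) + C := by
      funext z''; rw [hQ]; ring
    rw [hfun]
    have h1 : HasDerivAt (fun z'' : ℝ => z''^p) (p * z^(p-1)) z :=
      Real.hasDerivAt_rpow_const (Or.inl hz.ne')
    have h2 := ((h1.const_mul A).add ((hasDerivAt_id z).mul_const (y/κ))).add_const C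
    exact h2.congr_deriv (by ring)
  have hderiv1 : ∀ (y : ℝ) {z : ℝ}, 0 < z →
      deriv (fun z'' => Q z'' y) z = A*p*z^(p-1) + y/κ :=
    fun y z hz => (hd1 y hz).deriv
  have hd2 : ∀ (y : ℝ) {z : ℝ}, 0 < z →
      deriv (fun z' => deriv (fun z'' => Q z'' y) z') z = A*p*(p-1)*z^(p-2) := by
    intro y z hz
    have hev : (fun z' => deriv (fun z'' => Q z'' y) z')
        =ᶠ[nhds z] (fun z' => A*p*z'^(p-1) + y/κ) := by
      filter_upwards [Ioi_mem_nhds hz] with t ht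
      exact hderiv1 y ht
    rw [hev.deriv_eq]
    have h1 : HasDerivAt (fun z' : ℝ => z'^(p-1)) ((p-1) * z^(p-1-1)) z :=
      Real.hasDerivAt_rpow_const (Or.inl hz.ne')
    have h2 := ((h1.const_mul (A*p)).add_const (y/κ)).deriv
    rw [h2]
    have : p - 1 - 1 = p - 2 := by ring
    rw [this]; ring
  have hdy : ∀ (z y : ℝ), deriv (fun y' => Q z y') y = z/κ := by
    intro z y
    have hfun : (fun y' => Q z y') = fun y' => y' * (z/κ) + (A*z^p + C) := by
      funext y'; rw [hQ]; ring
    rw [hfun]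
    have h := (((hasDerivAt_id y).mul_const (z/κ)).add_const (A*z^p + C)).deriv
    simpa using h
  have hdy2 : ∀ (z y : ℝ),
      deriv (fun y' => deriv (fun y'' => Q z y'') y') y = 0 := by
    intro z y
    have hfun : (fun y' => deriv (fun y'' => Q z y'') y') = fun _ => z/κ :=
      funext fun y' => hdy z y'
    rw [hfun, deriv_const]
  have hdm : ∀ {z : ℝ}, 0 < z → ∀ (y : ℝ),
      deriv (fun y' => deriv (fun z' => Q z' y') z) y = 1/κ := by
    intro z hz y
    have hfun : (fun y' => deriv (fun z' => Q z' y') z)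
        = fun y' => y' * (1/κ) + A*p*z^(p-1) := by
      funext y'
      rw [hderiv1 y' hz]; ring
    rw [hfun]
    have h := (((hasDerivAt_id y).mul_const (1/κ)).add_const (A*p*z^(p-1))).deriv
    simpa using h
  constructor
  · have hfun : (fun q : ℝ × ℝ => Q q.1 q.2)
        = fun q : ℝ × ℝ => A * q.1^p + q.1*q.2/κ + C := by
      funext q; rw [hQ]
    rw [hfun]
    intro x hx
    have hx1 : (0:ℝ) < x.1 := hx.1
    apply ContDiffAt.contDiffWithinAt
    have h1 : ContDiffAt ℝ 2 (fun q : ℝ × ℝ => q.1 ^ p) x :=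
      (Real.contDiffAt_rpow_const_of_ne hx1.ne').comp x contDiffAt_fst
    exact ((contDiffAt_const.mul h1).add
      ((contDiffAt_fst.mul contDiffAt_snd).div_const κ)).add contDiffAt_const
  · intro z y hz hy
    rw [hderiv1 y hz, hd2 y hz, hdy z y, hdy2 z y, hdm hz y, hQ]
    have e1 : p - 1 + 1 = p := by ring
    have h1 := Real.rpow_add hz (p-1) 1
    rw [e1, Real.rpow_one] at h1
    have hz1' : z * z^(p-1) = z^p := by rw [h1]; ring
    have e2 : p - 2 + 2 = p := by ring
    have h2 := Real.rpow_add hz (p-2) 2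
    rw [e2, Real.rpow_two] at h2
    have hz2' : z^2 * z^(p-2) = z^p := by rw [h2]; ring
    have hKne : ρ + m - (1-γ)*r - (1-γ)/(2*γ)*θ^2 ≠ 0 :=
      ne_of_gt (by linarith)
    have key : (1/2)*θ^2*(p*(p-1)) + (ρ-r+m)*p - (ρ+m) = -K := by
      rw [hp, hK]; field_simp; ring
    have hAK : A*K = γ/(1-γ) := by
      rw [hA]; field_simp
    have c1 : (1/2)*θ^2*(A*p*(p-1)) + (ρ-r+m)*(A*p) - (ρ+m)*A = -(γ/(1-γ)) := by
      linear_combination A * key - hAK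
    have c2 : (ρ-r+m)/κ + μy/κ - θ*σy/κ - (ρ+m)/κ = -1 := by
      rw [hκ] at hκ0 ⊢
      field_simp [ne_of_gt hκ0]
      ring
    have c3 : (ρ+m)*C = m*(l*B)^(1-γ)/(1-γ) := by
      rw [hC]; field_simp
    linear_combination ((1/2)*θ^2*A*p*(p-1)) * hz2' + ((ρ-r+m)*A*p) * hz1'
      + z^p * c1 + (z*y) * c2 - c3
end

section
/- Let γ ∈ (0,1)∪(1,∞), θ, σ_y, μ_y ∈ ℝ, and ρ, r, m > 0 with ρ + m > (1-γ)r + ((1-γ)/(2γ))θ² (so K := (1/γ)(ρ + m − (1-γ)r − ((1-γ)/(2γ))θ²) > 0), and assume κ := r − μ_y + σ_y θ > 0. Define Q̂^B(z,y) := (γ/((1-γ)K))·z^{(γ-1)/γ} + z·y/κ and û(z) := (γ/(1-γ))·z^{(γ-1)/γ}. Then Q̂^B is twice continuously differentiable on (0,∞)², and for all z > 0, y > 0: (1/2)θ²z²·∂²Q̂^B/∂z² + (ρ−r+m)z·∂Q̂^B/∂z + (1/2)σ_y²y²·∂²Q̂^B/∂y² + μ_y y·∂Q̂^B/∂y − θσ_y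 z y·∂²Q̂^B/∂z∂y − (ρ+m)·Q̂^B(z,y) = −( û(z) + z·y ). -/
open Real Set

lemma aux_hasDerivAt (C a c d : ℝ) {z : ℝ} (hz : z ≠ 0) :
    HasDerivAt (fun x : ℝ => C * x ^ a + (x * c + d)) (C * a * z ^ (a-1) + c) z := by
  have h1 := (Real.hasDerivAt_rpow_const (p := a) (Or.inl hz)).const_mul C
  have h2 := (hasDerivAt_mul_const (x := z) c).add_const d
  rw [show C * a * z ^ (a-1) + c = C * (a * z ^ (a-1)) + c by ring]
  exact h1.add h2

/-- Proposition 4.1 (controlled bequest): the explicit dual function `Q̂^B` is `C²` on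
`(0,∞)²` and solves `−LQ̂^B = û + zy`. -/
theorem stmt_6 (γ θ σy μy ρ r m κ K : ℝ)
    (hγ0 : 0 < γ) (hγ1 : γ ≠ 1) (hρ : 0 < ρ) (hr : 0 < r) (hm : 0 < m)
    (hassume : (1-γ)*r + ((1-γ)/(2*γ))*θ^2 < ρ + m)
    (hK : K = (1/γ) * (ρ + m - (1-γ)*r - ((1-γ)/(2*γ))*θ^2))
    (hκ : κ = r - μy + σy*θ) (hκ0 : 0 < κ)
    (Q : ℝ → ℝ → ℝ)
    (hQ : ∀ z y : ℝ, Q z y = (γ/((1-γ)*K)) * z^((γ-1)/γ) + z*y/κ) :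
    ContDiffOn ℝ 2 (fun p : ℝ × ℝ => Q p.1 p.2) (Set.Ioi 0 ×ˢ Set.Ioi 0) ∧
    ∀ z y : ℝ, 0 < z → 0 < y →
      (1/2)*θ^2*z^2 * deriv (fun z' => deriv (fun z'' => Q z'' y) z') z
      + (ρ - r + m)*z * deriv (fun z' => Q z' y) z
      + (1/2)*σy^2*y^2 * deriv (fun y' => deriv (fun y'' => Q z y'') y') y
      + μy*y * deriv (fun y' => Q z y') y
      - θ*σy*z*y * deriv (fun y' => deriv (fun z' => Q z' y') z) y
      - (ρ+m) * Q z y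
      = -((γ/(1-γ))*z^((γ-1)/γ) + z*y) := by
  set a : ℝ := (γ-1)/γ with ha
  set C : ℝ := γ/((1-γ)*K) with hC
  have hγ1' : (1:ℝ) - γ ≠ 0 := by
    intro h; apply hγ1; linarith
  have hK0 : 0 < K := by
    rw [hK]
    have : 0 < ρ + m - (1-γ)*r - ((1-γ)/(2*γ))*θ^2 := by linarith
    positivity
  have hκne : κ ≠ 0 := ne_of_gt hκ0
  constructor
  · have hfun : (fun p : ℝ × ℝ => Q p.1 p.2)
        = fun p : ℝ × ℝ => C * p.1 ^ a + p.1 * p.2 / κ := by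
      funext p; rw [hQ]
    rw [hfun]
    intro p hp
    have hp1 : p.1 ≠ 0 := ne_of_gt (mem_Ioi.mp hp.1)
    apply ContDiffAt.contDiffWithinAt
    have h1 : ContDiffAt ℝ 2 (fun q : ℝ × ℝ => q.1 ^ a) p :=
      (Real.contDiffAt_rpow_const_of_ne (p := a) hp1).comp p contDiffAt_fst
    exact ((contDiffAt_const (c := C)).mul h1).add ((contDiffAt_fst.mul contDiffAt_snd).div_const κ)
  · intro z y hz hy
    have hzne : z ≠ 0 := ne_of_gt hz
    -- first z-derivative, for any z' > 0 and any y'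
    have hdz : ∀ y' : ℝ, ∀ z' : ℝ, z' ≠ 0 →
        deriv (fun z'' => Q z'' y') z' = C * a * z' ^ (a-1) + y'/κ := by
      intro y' z' hz'
      have h : (fun z'' => Q z'' y') = fun x : ℝ => C * x ^ a + (x * (y'/κ) + 0) := by
        funext x; rw [hQ]; ring
      rw [h]
      exact (aux_hasDerivAt C a (y'/κ) 0 hz').deriv
    -- second z-derivative
    have hdzz : deriv (fun z' => deriv (fun z'' => Q z'' y) z') z
        = C * a * (a-1) * z ^ (a-2) := by
      have hev : (fun z' => deriv (fun z'' => Q z'' y) z')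
          =ᶠ[nhds z] fun z' => (C*a) * z' ^ (a-1) + (z' * 0 + y/κ) := by
        filter_upwards [Ioi_mem_nhds hz] with z' hz'
        rw [hdz y z' (ne_of_gt (mem_Ioi.mp hz'))]; ring
      rw [hev.deriv_eq, (aux_hasDerivAt (C*a) (a-1) 0 (y/κ) hzne).deriv]
      ring_nf
    -- first y-derivative
    have hdy : ∀ y' : ℝ, deriv (fun y'' => Q z y'') y' = z/κ := by
      intro y'
      have h : (fun y'' => Q z y'') = fun y'' : ℝ => y'' * (z/κ) + C * z ^ a := by
        funext x; rw [hQ]; ring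
      rw [h]
      exact ((hasDerivAt_mul_const (x := y') (z/κ)).add_const _).deriv
    have hdyy : deriv (fun y' => deriv (fun y'' => Q z y'') y') y = 0 := by
      have h : (fun y' => deriv (fun y'' => Q z y'') y') = fun _ : ℝ => z/κ := by
        funext y'; exact hdy y'
      rw [h, deriv_const]
    -- mixed derivative
    have hdzy : deriv (fun y' => deriv (fun z' => Q z' y') z) y = 1/κ := by
      have h : (fun y' => deriv (fun z' => Q z' y') z)
          = fun y' : ℝ => y' * (1/κ) + C * a * z ^ (a-1) := by
        funext y'; rw [hdz y' z hzne]; ring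
      rw [h]
      exact ((hasDerivAt_mul_const (x := y) (1/κ)).add_const _).deriv
    rw [hdzz, hdzy, hdyy, hdy, hdz y z hzne, hQ]
    have hγ0' : γ ≠ 0 := ne_of_gt hγ0
    have hP : z ^ (a-2) * z^2 = z ^ a := by
      rw [show z^2 = z ^ ((2:ℕ):ℝ) by rw [Real.rpow_natCast], ← Real.rpow_add hz]
      norm_num
    have hQ' : z ^ (a-1) * z = z ^ a := by
      rw [Real.rpow_sub hz, Real.rpow_one, div_mul_cancel₀ _ hzne]
    have hB : C * ((1/2)*θ^2*a*(a-1) + (ρ-r+m)*a - (ρ+m)) = -(γ/(1-γ)) := by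
      have hKK : (1/2)*θ^2*a*(a-1) + (ρ-r+m)*a - (ρ+m) = -K := by
        rw [ha, hK]; field_simp; ring
      rw [hKK, hC]
      field_simp
    have h2 : (ρ-r+m)/κ + μy/κ - θ*σy/κ - (ρ+m)/κ = -1 := by
      rw [hκ] at hκne ⊢
      field_simp
      linarith
    linear_combination ((1/2)*θ^2*C*a*(a-1))*hP + ((ρ-r+m)*C*a)*hQ' + z^a*hB + (z*y)*h2
end

section
/- Under the hypotheses of Proposition 3.1 (γ ∈ (0,1)∪(1,∞), ρ, r, m > 0 with K > 0, κ := r − μ_y + σ_yθ > 0, l, B > 0), let h ∈ ℝ and define G(z,y) := Q̂(z,y) − z·h/r, where Q̂(z,y) = (γ/((1-γ)K))·z^{(γ-1)/γ} + z·y/κ + m·(lB)^{1-γ}/((1-γ)(ρ+m)). Then for all z > 0, y > 0: (1/2)θ²z²·∂²G/∂z² + (ρ−r+m)z·∂G/∂z + (1/2)σ_y²y²·∂²G/∂y² + μ_y y·∂G/∂y − θσ_y zy·∂²G/∂z∂y − (ρ+m)·G(z,y) = −û(z) − m·(lB)^{1-γ}/(1-γ) − z·y + z·h, where û(z) = (γ/(1-γ))·z^{(γ-1)/γ}.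 -/
open Real Set

set_option maxHeartbeats 1000000 in

/-- The key reduction identity: with `G(z,y) := Q̂(z,y) − zh/r` one has
`LG = −û − m·u(lB) − zy + zh` on `(0,∞)²`. -/
theorem stmt_7 (γ θ σy μy ρ r m κ K l B h : ℝ)
    (hγ0 : 0 < γ) (hγ1 : γ ≠ 1) (hρ : 0 < ρ) (hr : 0 < r) (hm : 0 < m)
    (hassume : (1-γ)*r + ((1-γ)/(2*γ))*θ^2 < ρ + m)
    (hK : K = (1/γ) * (ρ + m - (1-γ)*r - ((1-γ)/(2*γ))*θ^2))
    (hκ : κ = r - μy + σy*θ) (hκ0 : 0 < κ) (hl : 0 < l) (hB : 0 < B)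
    (G : ℝ → ℝ → ℝ)
    (hG : ∀ z y : ℝ, G z y = (γ/((1-γ)*K)) * z^((γ-1)/γ) + z*y/κ
        + m*(l*B)^(1-γ)/((1-γ)*(ρ+m)) - z*h/r) :
    ∀ z y : ℝ, 0 < z → 0 < y →
      (1/2)*θ^2*z^2 * deriv (fun z' => deriv (fun z'' => G z'' y) z') z
      + (ρ - r + m)*z * deriv (fun z' => G z' y) z
      + (1/2)*σy^2*y^2 * deriv (fun y' => deriv (fun y'' => G z y'') y') y
      + μy*y * deriv (fun y' => G z y') y
      - θ*σy*z*y * deriv (fun y' => deriv (fun z' => G z' y') z) y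
      - (ρ+m) * G z y
      = -((γ/(1-γ))*z^((γ-1)/γ)) - m*(l*B)^(1-γ)/(1-γ) - z*y + z*h := by
  intro z y hz hy
  set p : ℝ := (γ-1)/γ with hp
  set A : ℝ := γ/((1-γ)*K) with hA
  set C : ℝ := m*(l*B)^(1-γ)/((1-γ)*(ρ+m)) with hC
  have hγ : γ ≠ 0 := ne_of_gt hγ0
  have h1γ : (1:ℝ) - γ ≠ 0 := sub_ne_zero.mpr (Ne.symm hγ1)
  have hK0 : K ≠ 0 := by
    have : 0 < ρ + m - (1-γ)*r - ((1-γ)/(2*γ))*θ^2 := by linarith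
    rw [hK]; positivity
  have hκne : κ ≠ 0 := ne_of_gt hκ0
  have hrne : r ≠ 0 := ne_of_gt hr
  have hρm : ρ + m ≠ 0 := by positivity
  -- derivative in z, for any y', at any z' ≠ 0
  have hdz : ∀ (y' : ℝ) (z' : ℝ), z' ≠ 0 →
      HasDerivAt (fun z'' => G z'' y') (A*(p*z'^(p-1)) + y'/κ - h/r) z' := by
    intro y' z' hz'
    have h1 : HasDerivAt (fun z'' : ℝ => A * z''^p) (A*(p*z'^(p-1))) z' :=
      (Real.hasDerivAt_rpow_const (Or.inl hz')).const_mul A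
    have h2 : HasDerivAt (fun z'' : ℝ => z''*y'/κ) (y'/κ) z' := by
      have := (hasDerivAt_id z').mul_const (y'/κ)
      simpa [mul_div_assoc, one_mul] using this
    have h3 : HasDerivAt (fun z'' : ℝ => z''*h/r) (h/r) z' := by
      have := (hasDerivAt_id z').mul_const (h/r)
      simpa [mul_div_assoc, one_mul] using this
    have := ((h1.add h2).add_const C).sub h3
    refine this.congr_of_eventuallyEq ?_
    filter_upwards with w
    rw [hG]; rfl
  -- derivative in y, for any z', at any y'
  have hdy : ∀ (z' y' : ℝ),
      HasDerivAt (fun y'' => G z' y'') (z'/κ) y' := by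
    intro z' y'
    have h2 : HasDerivAt (fun y'' : ℝ => z'*y''/κ) (z'/κ) y' := by
      have := ((hasDerivAt_id y').const_mul z').div_const κ
      simpa [mul_div_assoc, mul_one] using this
    have := ((h2.const_add (A * z'^p)).add_const C).sub_const (z'*h/r)
    refine this.congr_of_eventuallyEq ?_
    filter_upwards with w
    rw [hG]
  -- first z-derivative
  have e1 : deriv (fun z' => G z' y) z = A*(p*z^(p-1)) + y/κ - h/r :=
    (hdz y z hz.ne').deriv
  -- second z-derivative
  have e2 : deriv (fun z' => deriv (fun z'' => G z'' y) z') z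
      = A*(p*((p-1)*z^(p-1-1))) := by
    have hev : (fun z' => deriv (fun z'' => G z'' y) z')
        =ᶠ[nhds z] (fun z' => A*(p*z'^(p-1)) + y/κ - h/r) := by
      filter_upwards [eventually_ne_nhds hz.ne'] with w hw
      exact (hdz y w hw).deriv
    rw [hev.deriv_eq]
    have h1 : HasDerivAt (fun z' : ℝ => A*(p*z'^(p-1)))
        (A*(p*((p-1)*z^(p-1-1)))) z := by
      have := (Real.hasDerivAt_rpow_const (p := p-1) (Or.inl hz.ne')).const_mul p
        |>.const_mul A
      simpa [mul_assoc] using this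
    exact ((h1.add_const (y/κ)).sub_const (h/r)).deriv
  -- first y-derivative
  have e3 : deriv (fun y' => G z y') y = z/κ := (hdy z y).deriv
  -- second y-derivative
  have e4 : deriv (fun y' => deriv (fun y'' => G z y'') y') y = 0 := by
    have : (fun y' => deriv (fun y'' => G z y'') y') = fun _ => z/κ :=
      funext fun y' => (hdy z y').deriv
    rw [this, deriv_const]
  -- mixed derivative
  have e5 : deriv (fun y' => deriv (fun z' => G z' y') z) y = 1/κ := by
    have hfe : (fun y' => deriv (fun z' => G z' y') z)
        = fun y' => A*(p*z^(p-1)) + y'/κ - h/r :=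
      funext fun y' => (hdz y' z hz.ne').deriv
    rw [hfe]
    have h2 : HasDerivAt (fun y' : ℝ => y'/κ) (1/κ) y := by
      simpa using (hasDerivAt_id y).div_const κ
    exact (((h2.const_add (A*(p*z^(p-1)))).sub_const (h/r)).deriv).trans rfl
  rw [e1, e2, e3, e4, e5, hG]
  set W := (l*B)^(1-γ) with hW
  have hz1 : z^(p-1) = z^p / z := by
    rw [Real.rpow_sub hz, Real.rpow_one]
  have hz2 : z^(p-1-1) = z^p / z^2 := by
    rw [show p-1-1 = p - 2 by ring, Real.rpow_sub hz, Real.rpow_two]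
  have hzz : z ≠ 0 := hz.ne'
  have hXne : ρ + m - (1-γ)*r - ((1-γ)/(2*γ))*θ^2 ≠ 0 := by
    have : 0 < ρ + m - (1-γ)*r - ((1-γ)/(2*γ))*θ^2 := by linarith
    exact ne_of_gt this
  have F1 : (1/2)*θ^2*z^2 * (A*(p*((p-1)*z^(p-1-1))))
      = (1/2)*θ^2*(p*(p-1))*A*z^p := by
    rw [hz2]; field_simp
  have F2 : (ρ-r+m)*z*(A*(p*z^(p-1))) = (ρ-r+m)*(p*A*z^p) := by
    rw [hz1]; field_simp
  have hb : p*γ = γ-1 := by rw [hp]; field_simp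
  have ha : p*(p-1)*γ^2 = 1-γ := by linear_combination (p*γ-1)*hb
  have hc : 2*γ^2*K = 2*γ*(ρ+m) - 2*γ*(1-γ)*r - (1-γ)*θ^2 := by
    rw [hK]; field_simp
  have h2γ : (2:ℝ)*γ ≠ 0 := by positivity
  have E2 : (((1/2)*θ^2*(p*(p-1)) + (ρ-r+m)*p - (ρ+m))*γ*(1-γ))*(2*γ)
      = ((-γ*K)*(1-γ))*(2*γ) := by
    linear_combination (θ^2*(1-γ))*ha + (2*γ*(ρ-r+m)*(1-γ))*hb + (1-γ)*hc
  have E1 : (((1/2)*θ^2*(p*(p-1)) + (ρ-r+m)*p - (ρ+m))*γ)*(1-γ)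
      = ((-γ*K))*(1-γ) := by
    have := mul_right_cancel₀ h2γ E2
    linear_combination this
  have E0 : ((1/2)*θ^2*(p*(p-1)) + (ρ-r+m)*p - (ρ+m))*γ = -γ*K :=
    mul_right_cancel₀ h1γ E1
  have keyA : ((1/2)*θ^2*(p*(p-1)) + (ρ-r+m)*p - (ρ+m))*A = -(γ/(1-γ)) := by
    have hden : (1-γ)*K ≠ 0 := mul_ne_zero h1γ hK0
    rw [hA, mul_div_assoc', div_eq_iff hden]
    have hrhs : -(γ/(1-γ)) * ((1-γ)*K) = -γ*K := by
      field_simp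
    rw [hrhs]; exact E0
  have keyκ2 : (μy - θ*σy - r)/κ = -1 := by
    rw [div_eq_iff hκne, hκ]; ring
  have F5 : (ρ+m)*C = m*W/(1-γ) := by
    rw [hC]; field_simp
  have Fr : r/r = (1:ℝ) := div_self hrne
  linear_combination F1 + F2 + z^p*keyA + (z*y)*keyκ2 - F5 + (z*h)*Fr
end

section
/- Let h > 0, r > 0, ρ + m > 0, α₁ < 0, G₀ > 0, b := G₀·r·α₁/((ρ+m)·h·(α₁−1)) and C₁ := −(h/(r·α₁))·b^{1−α₁}. Define ŵ(z) := C₁·z^{α₁} + h·z/r − G₀/(ρ+m) for z > 0. Then ŵ(b) = 0, ŵ'(b) = 0, ŵ''(z) > 0 for all z > 0, and ŵ(z) ≥ 0 for all z ≥ b. -/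
open Real

/-- Step 1 of the verification (inequality (A.6)): the candidate dual value function
`ŵ(z) = C₁ z^{α₁} + hz/r − G₀/(ρ+m)` vanishes to first order at the free boundary `b`,
is strictly convex on `(0,∞)`, and is nonnegative on `[b,∞)`. -/
theorem stmt_12 (h r ρ m α₁ G₀ b C₁ : ℝ) (hh : 0 < h) (hr : 0 < r) (hρm : 0 < ρ + m)
    (hα : α₁ < 0) (hG : 0 < G₀)
    (hb : b = G₀ * r * α₁ / ((ρ + m) * h * (α₁ - 1)))
    (hC : C₁ = -(h/(r*α₁)) * b ^ (1 - α₁))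
    (w : ℝ → ℝ) (hw : ∀ z : ℝ, w z = C₁ * z ^ α₁ + h * z / r - G₀ / (ρ + m)) :
    w b = 0 ∧ deriv w b = 0 ∧ (∀ z : ℝ, 0 < z → 0 < deriv (deriv w) z) ∧
    ∀ z : ℝ, b ≤ z → 0 ≤ w z := by
  have hα1 : α₁ - 1 < 0 := by linarith
  have hb0 : 0 < b := by
    rw [hb]
    apply div_pos_of_neg_of_neg
    · exact mul_neg_of_pos_of_neg (by positivity) hα
    · exact mul_neg_of_pos_of_neg (by positivity) hα1
  have hC0 : 0 < C₁ := by
    rw [hC]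
    have : h / (r * α₁) < 0 := div_neg_of_pos_of_neg hh (mul_neg_of_pos_of_neg hr hα)
    have hp : (0:ℝ) < b ^ (1 - α₁) := rpow_pos_of_pos hb0 _
    nlinarith
  -- key rpow identities at b
  have hbb : b ^ (1 - α₁) * b ^ α₁ = b := by
    rw [← rpow_add hb0]; simp
  have hbb' : b ^ (1 - α₁) * b ^ (α₁ - 1) = 1 := by
    rw [← rpow_add hb0]; simp
  have hα0 : α₁ ≠ 0 := ne_of_lt hα
  have hα10 : α₁ - 1 ≠ 0 := ne_of_lt hα1
  -- w b = 0
  have hwb : w b = 0 := by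
    rw [hw, hC]
    have : -(h / (r * α₁)) * b ^ (1 - α₁) * b ^ α₁ = -(h / (r * α₁)) * b := by
      rw [mul_assoc, hbb]
    rw [this, hb]
    field_simp
    ring
  -- derivative of w at nonzero points
  have hwd : ∀ z : ℝ, z ≠ 0 → HasDerivAt w (C₁ * (α₁ * z ^ (α₁ - 1)) + h / r) z := by
    intro z hz
    have h1 : HasDerivAt (fun z : ℝ => z ^ α₁) (α₁ * z ^ (α₁ - 1)) z :=
      Real.hasDerivAt_rpow_const (Or.inl hz)
    have h2 : HasDerivAt (fun z : ℝ => C₁ * z ^ α₁ + h * z / r - G₀ / (ρ + m))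
        (C₁ * (α₁ * z ^ (α₁ - 1)) + h * 1 / r) z := by
      exact ((h1.const_mul C₁).add (((hasDerivAt_id z).const_mul h).div_const r)).sub_const _
    have : w = fun z : ℝ => C₁ * z ^ α₁ + h * z / r - G₀ / (ρ + m) := funext hw
    rw [this]
    simpa using h2
  have hderiv : ∀ z : ℝ, z ≠ 0 → deriv w z = C₁ * (α₁ * z ^ (α₁ - 1)) + h / r :=
    fun z hz => (hwd z hz).deriv
  -- deriv w b = 0
  have hCb : C₁ * (α₁ * b ^ (α₁ - 1)) = -(h / r) := by
    rw [hC]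
    field_simp
    linear_combination (-1 : ℝ) * hbb'
  have hdb : deriv w b = 0 := by
    rw [hderiv b hb0.ne', hCb]; ring
  refine ⟨hwb, hdb, ?_, ?_⟩
  · -- second derivative positive
    intro z hz
    have heq : deriv w =ᶠ[nhds z] fun z => C₁ * (α₁ * z ^ (α₁ - 1)) + h / r := by
      filter_upwards [eventually_ne_nhds hz.ne'] with x hx using hderiv x hx
    rw [heq.deriv_eq]
    have h1 : HasDerivAt (fun z : ℝ => z ^ (α₁ - 1)) ((α₁ - 1) * z ^ (α₁ - 1 - 1)) z :=
      Real.hasDerivAt_rpow_const (Or.inl hz.ne')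
    have h2 : HasDerivAt (fun z : ℝ => C₁ * (α₁ * z ^ (α₁ - 1)) + h / r)
        (C₁ * (α₁ * ((α₁ - 1) * z ^ (α₁ - 1 - 1)))) z :=
      ((h1.const_mul α₁).const_mul C₁).add_const _
    rw [h2.deriv]
    have h3 : 0 < α₁ * (α₁ - 1) := mul_pos_of_neg_of_neg hα hα1
    nlinarith [mul_pos (mul_pos hC0 h3) (rpow_pos_of_pos hz (α₁ - 1 - 1))]
  · -- nonneg on [b, ∞)
    intro z hz
    have hmono : MonotoneOn w (Set.Ici b) := by
      apply monotoneOn_of_deriv_nonneg (convex_Ici b)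
      · intro x hx
        exact (hwd x (lt_of_lt_of_le hb0 hx).ne').continuousAt.continuousWithinAt
      · intro x hx
        rw [interior_Ici] at hx
        exact (hwd x (lt_trans hb0 hx).ne').differentiableAt.differentiableWithinAt
      · intro x hx
        rw [interior_Ici] at hx
        rw [hderiv x (lt_trans hb0 hx).ne']
        have hle : x ^ (α₁ - 1) ≤ b ^ (α₁ - 1) :=
          rpow_le_rpow_of_nonpos hb0 hx.le hα1.le
        have : C₁ * (α₁ * x ^ (α₁ - 1)) ≥ C₁ * (α₁ * b ^ (α₁ - 1)) := by
          have hn : C₁ * α₁ < 0 := mul_neg_of_pos_of_neg hC0 hα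
          nlinarith
        rw [hCb] at this
        linarith
    have := hmono (Set.self_mem_Ici) hz hz
    rw [hwb] at this
    exact this
end

section
/- Let γ ∈ (0,1), h > 0, r > 0, m > 0, ρ > 0 with ρ + m > r, α₁ < 0, G₀ := m·(lB)^{1-γ}/(1-γ) > 0 (l, B > 0), b := G₀·r·α₁/((ρ+m)·h·(α₁−1)), and C₁ := −(h/(r·α₁))·b^{1−α₁}. Define ŵ(z) := C₁·z^{α₁} + h·z/r − G₀/(ρ+m) for z > b and ŵ(z) := 0 for 0 < z ≤ b. Then 0 ≤ ŵ(z) ≤ z·h/r for all z > 0. -/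
open Real

/-- Proposition 3.3 for the explicit dual value function: the piecewise function
`ŵ` (equal to `C₁ z^{α₁} + hz/r − G₀/(ρ+m)` above the boundary `b` and `0` below)
satisfies `0 ≤ ŵ(z) ≤ zh/r` for all `z > 0`. -/
theorem stmt_13 (γ h r m ρ α₁ l B G₀ b C₁ : ℝ) (hγ0 : 0 < γ) (hγ1 : γ < 1)
    (hh : 0 < h) (hr : 0 < r) (hm : 0 < m) (hρ : 0 < ρ) (hρmr : r < ρ + m)
    (hα : α₁ < 0) (hl : 0 < l) (hB : 0 < B)
    (hG : G₀ = m * (l*B)^(1-γ)/(1-γ))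
    (hb : b = G₀ * r * α₁ / ((ρ + m) * h * (α₁ - 1)))
    (hC : C₁ = -(h/(r*α₁)) * b ^ (1 - α₁))
    (w : ℝ → ℝ)
    (hw1 : ∀ z : ℝ, b < z → w z = C₁ * z ^ α₁ + h * z / r - G₀ / (ρ + m))
    (hw2 : ∀ z : ℝ, 0 < z → z ≤ b → w z = 0) :
    ∀ z : ℝ, 0 < z → 0 ≤ w z ∧ w z ≤ z * h / r := by
  have hρm : 0 < ρ + m := by linarith
  have h1γ : 0 < 1 - γ := by linarith
  have hG0 : 0 < G₀ := by
    rw [hG]; exact div_pos (mul_pos hm (rpow_pos_of_pos (mul_pos hl hB) _)) h1γ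
  have h1α : 0 < 1 - α₁ := by linarith
  have hb0 : 0 < b := by
    rw [hb]
    apply div_pos_of_neg_of_neg
    · exact mul_neg_of_pos_of_neg (mul_pos hG0 hr) hα
    · exact mul_neg_of_pos_of_neg (mul_pos hρm hh) (by linarith)
  have hCb : C₁ * b ^ α₁ = G₀ / ((ρ + m) * (1 - α₁)) := by
    have hbb : b ^ (1 - α₁) * b ^ α₁ = b := by
      rw [← rpow_add hb0]; norm_num
    have hne : α₁ - 1 ≠ 0 := by linarith
    rw [hC, mul_assoc, hbb, hb]
    field_simp [hr.ne', hα.ne, hh.ne', hρm.ne', hne]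
    ring
  have hhb : h * b / r = G₀ / ((ρ + m) * (1 - α₁)) * (-α₁) := by
    have hne : α₁ - 1 ≠ 0 := by linarith
    rw [hb]; field_simp [hr.ne', hα.ne, hh.ne', hρm.ne', hne]; ring
  intro z hz
  rcases le_or_gt z b with hle | hlt
  · rw [hw2 z hz hle]
    exact ⟨le_refl 0, by positivity⟩
  · rw [hw1 z hlt]
    set t := z / b with ht_def
    have ht1 : 1 ≤ t := le_of_lt ((one_lt_div hb0).2 hlt)
    have ht0 : 0 < t := lt_of_lt_of_le one_pos ht1
    have hzbt : z = b * t := by rw [ht_def]; field_simp [hb0.ne']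
    have hzpow : C₁ * z ^ α₁ = G₀ / ((ρ + m) * (1 - α₁)) * t ^ α₁ := by
      rw [hzbt, mul_rpow hb0.le ht0.le, ← mul_assoc, hCb]
    have hzh : h * z / r = G₀ / ((ρ + m) * (1 - α₁)) * (-α₁) * t := by
      rw [hzbt, show h * (b * t) / r = h * b / r * t by ring, hhb]
    have hGA : G₀ / (ρ + m) = G₀ / ((ρ + m) * (1 - α₁)) * (1 - α₁) := by
      field_simp
    set A := G₀ / ((ρ + m) * (1 - α₁)) with hA_def
    have hA0 : 0 < A := div_pos hG0 (mul_pos hρm h1α)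
    -- Bernoulli-type inequality via weighted AM-GM
    have key : 1 - α₁ ≤ t ^ α₁ + (-α₁) * t := by
      have w1 : (0:ℝ) ≤ 1 / (1 - α₁) := by positivity
      have w2 : (0:ℝ) ≤ (-α₁) / (1 - α₁) := div_nonneg (by linarith) h1α.le
      have hsum : 1 / (1 - α₁) + (-α₁) / (1 - α₁) = 1 := by
        field_simp
        ring
      have hAMGM := Real.geom_mean_le_arith_mean2_weighted w1 w2
        (rpow_nonneg ht0.le α₁) ht0.le hsum
      have hgm : (t ^ α₁) ^ (1 / (1 - α₁)) * t ^ ((-α₁) / (1 - α₁)) = 1 := by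
        rw [← rpow_mul ht0.le, ← rpow_add ht0,
          show α₁ * (1 / (1 - α₁)) + (-α₁) / (1 - α₁) = 0 by field_simp; ring, rpow_zero]
      rw [hgm] at hAMGM
      have h' : (1 - α₁) * 1 ≤ (1 - α₁) * (1 / (1 - α₁) * t ^ α₁ + (-α₁) / (1 - α₁) * t) :=
        mul_le_mul_of_nonneg_left hAMGM h1α.le
      calc 1 - α₁ = (1 - α₁) * 1 := by ring
        _ ≤ _ := h'
        _ = t ^ α₁ + (-α₁) * t := by field_simp
    have htup : t ^ α₁ ≤ 1 := rpow_le_one_of_one_le_of_nonpos ht1 hα.le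
    constructor
    · rw [hzpow, hzh, hGA]
      nlinarith [mul_le_mul_of_nonneg_left key hA0.le]
    · rw [hzpow, hzh, hGA, show z * h / r = h * z / r by ring, hzh]
      nlinarith [mul_le_mul_of_nonneg_left htup hA0.le]
end

section
/- Let γ ∈ (0,1), K > 0, κ > 0, h > 0, r > 0, ρ + m > 0, α₁ < 0, G₀ > 0, b := G₀·r·α₁/((ρ+m)·h·(α₁−1)), C₁ := −(h/(r·α₁))·b^{1−α₁}, and y > 0. Define v(z,y) := C₁·z^{α₁} + (γ/((1-γ)K))·z^{(γ-1)/γ} + z·y/κ for z > b, and v(z,y) := (γ/((1-γ)K))·z^{(γ-1)/γ} + z·y/κ − h·z/r + G₀/(ρ+m) for 0 < z ≤ b. Then: (i) z ↦ v(z,y) is differentiable on (0,∞), with derivative v_z(z,y) = C₁α₁z^{α₁−1} − z^{-1/γ}/K + y/κ for z > b and v_z(z,y) = −z^{-1/γ}/K + y/κ − h/r for 0 < z ≤ b; (ii) z ↦ v(z,y) is strictly convex on (0,∞); (iii) −v_z(z,y) → +∞ as z → 0⁺; and (iv) −v_z(z,y) → −y/κ as z → +∞. -/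
open Real Filter

/-- Proposition 3.8 with formulas (A.10)–(A.11): for fixed `y > 0`, the dual value
function `z ↦ v(z,y)` is differentiable on `(0,∞)` with the stated derivative, is
strictly convex, and `−v_z(z,y) → +∞` as `z → 0⁺` while `−v_z(z,y) → −y/κ`
as `z → +∞`. -/
theorem stmt_14 (γ K κ h r ρ m α₁ G₀ y b C₁ : ℝ) (hγ0 : 0 < γ) (hγ1 : γ < 1)
    (hK : 0 < K) (hκ : 0 < κ) (hh : 0 < h) (hr : 0 < r) (hρm : 0 < ρ + m)
    (hα : α₁ < 0) (hG : 0 < G₀) (hy : 0 < y)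
    (hb : b = G₀ * r * α₁ / ((ρ + m) * h * (α₁ - 1)))
    (hC : C₁ = -(h/(r*α₁)) * b ^ (1 - α₁))
    (v : ℝ → ℝ)
    (hv : ∀ z : ℝ, 0 < z → v z = if b < z
        then C₁ * z ^ α₁ + (γ/((1-γ)*K)) * z ^ ((γ-1)/γ) + z * y / κ
        else (γ/((1-γ)*K)) * z ^ ((γ-1)/γ) + z * y / κ - h * z / r + G₀/(ρ+m)) :
    (∀ z : ℝ, 0 < z → HasDerivAt v
      (if b < z then C₁ * α₁ * z ^ (α₁-1) - z ^ (-(1/γ)) / K + y / κ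
        else -z ^ (-(1/γ)) / K + y / κ - h / r) z) ∧
    StrictConvexOn ℝ (Set.Ioi 0) v ∧
    Tendsto (fun z => -deriv v z) (nhdsWithin 0 (Set.Ioi 0)) atTop ∧
    Tendsto (fun z => -deriv v z) atTop (nhds (-(y/κ))) := by
  have hγne : γ ≠ 0 := ne_of_gt hγ0
  have h1γ : (0:ℝ) < 1 - γ := by linarith
  have hα1 : α₁ - 1 < 0 := by linarith
  have hb0 : 0 < b := by
    rw [hb]
    apply div_pos_of_neg_of_neg
    · exact mul_neg_of_pos_of_neg (mul_pos hG hr) hα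
    · exact mul_neg_of_pos_of_neg (mul_pos hρm hh) hα1
  have hC1 : 0 < C₁ := by
    rw [hC]
    have h1 : h / (r * α₁) < 0 :=
      div_neg_of_pos_of_neg hh (mul_neg_of_pos_of_neg hr hα)
    have h2 : (0:ℝ) < b ^ (1 - α₁) := rpow_pos_of_pos hb0 _
    nlinarith
  -- the two pieces and their derivatives
  set g₁ : ℝ → ℝ := fun z => C₁ * z ^ α₁ + (γ/((1-γ)*K)) * z ^ ((γ-1)/γ) + z * y / κ with hg₁
  set g₂ : ℝ → ℝ := fun z =>
    (γ/((1-γ)*K)) * z ^ ((γ-1)/γ) + z * y / κ - h * z / r + G₀/(ρ+m) with hg₂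
  set f₁ : ℝ → ℝ := fun z => C₁ * α₁ * z ^ (α₁-1) - z ^ (-(1/γ)) / K + y / κ with hf₁
  set f₂ : ℝ → ℝ := fun z => -z ^ (-(1/γ)) / K + y / κ - h / r with hf₂
  -- smooth fit: derivative match at b
  have hbpow : b ^ (1 - α₁) * b ^ (α₁ - 1) = 1 := by
    rw [← rpow_add hb0]; norm_num
  have keyd : C₁ * α₁ * b ^ (α₁ - 1) = -(h/r) := by
    rw [hC]
    have hrα : r * α₁ ≠ 0 := ne_of_lt (mul_neg_of_pos_of_neg hr hα)
    have hhr : h / (r * α₁) * α₁ = h / r := by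
      rw [div_mul_eq_mul_div, mul_div_mul_right _ _ hα.ne]
    linear_combination (-(h/(r*α₁)) * α₁) * hbpow - hhr
  -- value match at b
  have hbpow1 : b ^ (1 - α₁) * b ^ α₁ = b := by
    rw [← rpow_add hb0]; norm_num
  have keyv : g₁ b = g₂ b := by
    simp only [hg₁, hg₂]
    have : C₁ * b ^ α₁ = - h * b / r + G₀/(ρ+m) := by
      rw [hC]
      have h1 : -(h/(r*α₁)) * b ^ (1 - α₁) * b ^ α₁ = -(h/(r*α₁)) * b := by
        rw [mul_assoc, hbpow1]
      rw [h1]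
      have hden : (ρ+m)*h*(α₁-1) ≠ 0 :=
        mul_ne_zero (mul_ne_zero (ne_of_gt hρm) (ne_of_gt hh)) (ne_of_lt hα1)
      have hbeq : b * ((ρ+m)*h*(α₁-1)) = G₀*r*α₁ := by
        rw [hb, div_mul_cancel₀ _ hden]
      have hrne : r ≠ 0 := hr.ne'
      have hαne : α₁ ≠ 0 := hα.ne
      have hρmne : ρ + m ≠ 0 := hρm.ne'
      field_simp
      linear_combination hbeq
    rw [this]; ring
  have hexp : (γ-1)/γ - 1 = -(1/γ) := by field_simp; ring
  -- derivatives of the pieces at any z > 0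
  have Hg₁ : ∀ z : ℝ, 0 < z → HasDerivAt g₁ (f₁ z) z := by
    intro z hz
    have d1 : HasDerivAt (fun x : ℝ => x ^ α₁) (α₁ * z ^ (α₁-1)) z :=
      Real.hasDerivAt_rpow_const (Or.inl hz.ne')
    have d2 : HasDerivAt (fun x : ℝ => x ^ ((γ-1)/γ)) ((γ-1)/γ * z ^ ((γ-1)/γ-1)) z :=
      Real.hasDerivAt_rpow_const (Or.inl hz.ne')
    have := ((d1.const_mul C₁).add (d2.const_mul (γ/((1-γ)*K)))).add
      (((hasDerivAt_id z).const_mul (y/κ)))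
    have heq : g₁ = fun x => C₁ * x ^ α₁ + (γ/((1-γ)*K)) * x ^ ((γ-1)/γ) + (y/κ) * x := by
      funext x; simp only [hg₁]; ring
    rw [heq]
    refine this.congr_deriv ?_
    rw [hexp]
    simp only [hf₁]
    field_simp
    ring
  have Hg₂ : ∀ z : ℝ, 0 < z → HasDerivAt g₂ (f₂ z) z := by
    intro z hz
    have d2 : HasDerivAt (fun x : ℝ => x ^ ((γ-1)/γ)) ((γ-1)/γ * z ^ ((γ-1)/γ-1)) z :=
      Real.hasDerivAt_rpow_const (Or.inl hz.ne')
    have := (((d2.const_mul (γ/((1-γ)*K))).add ((hasDerivAt_id z).const_mul (y/κ))).sub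
      ((hasDerivAt_id z).const_mul (h/r))).add_const (G₀/(ρ+m))
    have heq : g₂ = fun x =>
        (γ/((1-γ)*K)) * x ^ ((γ-1)/γ) + (y/κ) * x - (h/r) * x + G₀/(ρ+m) := by
      funext x; simp only [hg₂]; ring
    rw [heq]
    refine this.congr_deriv ?_
    rw [hexp]
    simp only [hf₂]
    field_simp
    ring
  have hf₁b : f₁ b = f₂ b := by
    simp only [hf₁, hf₂]; rw [keyd]; ring
  -- v equals the pieces on appropriate sets
  have hvg₁ : ∀ z : ℝ, b < z → v z = g₁ z := by
    intro z hz; rw [hv z (hb0.trans hz), if_pos hz]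
  have hvg₂ : ∀ z : ℝ, 0 < z → z ≤ b → v z = g₂ z := by
    intro z hz hzb; rw [hv z hz, if_neg (not_lt.mpr hzb)]
  have hvIci : ∀ z ∈ Set.Ici b, v z = g₁ z := by
    intro z hz
    rcases eq_or_lt_of_le (Set.mem_Ici.mp hz) with hz' | hz'
    · rw [← hz', hvg₂ b hb0 le_rfl, keyv]
    · exact hvg₁ z hz'
  -- the main derivative statement
  have hderiv : ∀ z : ℝ, 0 < z →
      HasDerivAt v (if b < z then f₁ z else f₂ z) z := by
    intro z hz
    rcases lt_trichotomy z b with hlt | heq | hgt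
    · rw [if_neg (not_lt.mpr hlt.le)]
      refine (Hg₂ z hz).congr_of_eventuallyEq ?_
      exact Filter.eventuallyEq_of_mem (isOpen_Ioo.mem_nhds ⟨hz, hlt⟩)
        (fun x hx => hvg₂ x hx.1 hx.2.le)
    · subst heq
      rw [if_neg (lt_irrefl z)]
      have h₁ : HasDerivWithinAt v (f₂ z) (Set.Ici z) z := by
        refine ((Hg₁ z hz).hasDerivWithinAt.congr hvIci (hvIci z Set.self_mem_Ici)).congr_deriv hf₁b
      have h₂ : HasDerivWithinAt v (f₂ z) (Set.Ioc 0 z) z := by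
        refine (Hg₂ z hz).hasDerivWithinAt.congr ?_ (hvg₂ z hz le_rfl)
        intro x hx; exact hvg₂ x hx.1 hx.2
      have hun : Set.Ioc 0 z ∪ Set.Ici z = Set.Ioi 0 := by
        ext x
        simp only [Set.mem_union, Set.mem_Ioc, Set.mem_Ici, Set.mem_Ioi]
        constructor
        · rintro (⟨h1, _⟩ | h1)
          · exact h1
          · exact lt_of_lt_of_le hz h1
        · intro h1
          rcases le_or_gt x z with h2 | h2
          · exact Or.inl ⟨h1, h2⟩
          · exact Or.inr h2.le
      have := h₂.union h₁
      rw [hun] at this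
      exact this.hasDerivAt (Ioi_mem_nhds hz)
    · rw [if_pos hgt]
      refine (Hg₁ z hz).congr_of_eventuallyEq ?_
      exact Filter.eventuallyEq_of_mem ((isOpen_Ioi).mem_nhds hgt)
        (fun x hx => hvg₁ x hx)
  -- deriv v agrees with the formula on (0,∞)
  have hderiveq : ∀ z ∈ Set.Ioi (0:ℝ), deriv v z = if b < z then f₁ z else f₂ z := by
    intro z hz; exact (hderiv z hz).deriv
  -- strict monotonicity of the derivative
  have hneg : -(1/γ) < 0 := by
    have : 0 < 1/γ := by positivity
    linarith
  have hmono2 : ∀ x z : ℝ, 0 < x → x < z → f₂ x < f₂ z := by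
    intro x z hx hxz
    have h1 : z ^ (-(1/γ)) < x ^ (-(1/γ)) := Real.rpow_lt_rpow_of_neg hx hxz hneg
    have h2 : z ^ (-(1/γ)) / K < x ^ (-(1/γ)) / K := (div_lt_div_iff_of_pos_right hK).mpr h1
    simp only [hf₂, neg_div]
    linarith
  have hmono1 : ∀ x z : ℝ, b ≤ x → x < z → f₁ x < f₁ z := by
    intro x z hxb hxz
    have hx : 0 < x := lt_of_lt_of_le hb0 hxb
    have h1 : z ^ (-(1/γ)) < x ^ (-(1/γ)) := Real.rpow_lt_rpow_of_neg hx hxz hneg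
    have h2 : z ^ (-(1/γ)) / K < x ^ (-(1/γ)) / K := (div_lt_div_iff_of_pos_right hK).mpr h1
    have h3 : z ^ (α₁-1) < x ^ (α₁-1) := Real.rpow_lt_rpow_of_neg hx hxz hα1
    have h4 : C₁ * α₁ * x ^ (α₁-1) < C₁ * α₁ * z ^ (α₁-1) := by
      have : C₁ * α₁ < 0 := mul_neg_of_pos_of_neg hC1 hα
      nlinarith
    simp only [hf₁, neg_div]
    linarith
  have hmonoF : StrictMonoOn (fun z => if b < z then f₁ z else f₂ z) (Set.Ioi (0:ℝ)) := by
    intro x hx z hz hxz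
    simp only
    rcases le_or_gt x b with hxb | hxb
    · rw [if_neg (not_lt.mpr hxb)]
      rcases le_or_gt z b with hzb | hzb
      · rw [if_neg (not_lt.mpr hzb)]
        exact hmono2 x z hx hxz
      · rw [if_pos hzb]
        calc f₂ x ≤ f₂ b := by
              rcases eq_or_lt_of_le hxb with h | h
              · rw [h]
              · exact (hmono2 x b hx h).le
          _ = f₁ b := hf₁b.symm
          _ < f₁ z := hmono1 b z le_rfl hzb
    · rw [if_pos hxb, if_pos (hxb.trans hxz)]
      exact hmono1 x z hxb.le hxz
  have hcont : ContinuousOn v (Set.Ioi (0:ℝ)) :=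
    fun z hz => (hderiv z hz).continuousAt.continuousWithinAt
  have hconv : StrictConvexOn ℝ (Set.Ioi (0:ℝ)) v := by
    apply StrictMonoOn.strictConvexOn_of_deriv (convex_Ioi 0) hcont
    rw [interior_Ioi]
    exact hmonoF.congr (fun z hz => (hderiveq z hz).symm)
  -- limit as z → 0⁺
  have hpowlim0 : Tendsto (fun z : ℝ => z ^ (-(1/γ))) (nhdsWithin 0 (Set.Ioi 0)) atTop := by
    have h1 : Tendsto (fun z : ℝ => (z⁻¹) ^ (1/γ)) (nhdsWithin 0 (Set.Ioi 0)) atTop :=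
      (tendsto_rpow_atTop (by positivity : (0:ℝ) < 1/γ)).comp tendsto_inv_nhdsGT_zero
    refine h1.congr' ?_
    filter_upwards [self_mem_nhdsWithin] with z hz
    show (z⁻¹ : ℝ) ^ (1/γ) = z ^ (-(1/γ))
    rw [Real.inv_rpow (le_of_lt hz), ← Real.rpow_neg (le_of_lt hz)]
  have hlim0 : Tendsto (fun z => -deriv v z) (nhdsWithin 0 (Set.Ioi 0)) atTop := by
    have hIoo : Set.Ioo (0:ℝ) b ∈ nhdsWithin (0:ℝ) (Set.Ioi 0) := by
      rw [← Set.Ioi_inter_Iio]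
      exact Filter.inter_mem self_mem_nhdsWithin
        (mem_nhdsWithin_of_mem_nhds (Iio_mem_nhds hb0))
    have heventually : (fun z => -deriv v z) =ᶠ[nhdsWithin (0:ℝ) (Set.Ioi 0)]
        fun z => z ^ (-(1/γ)) / K - y / κ + h / r := by
      filter_upwards [hIoo] with z hz
      rw [hderiveq z hz.1, if_neg (not_lt.mpr hz.2.le)]
      simp only [hf₂]; ring
    refine Tendsto.congr' heventually.symm ?_
    apply tendsto_atTop_add_const_right
    apply tendsto_atTop_add_const_right
    exact hpowlim0.atTop_div_const hK
  -- limit as z → ∞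
  have hliminf : Tendsto (fun z => -deriv v z) atTop (nhds (-(y/κ))) := by
    have h1 : Tendsto (fun z : ℝ => z ^ (α₁-1)) atTop (nhds 0) := by
      have := tendsto_rpow_neg_atTop (y := 1 - α₁) (by linarith)
      convert this using 2 with z
      ring_nf
    have h2 : Tendsto (fun z : ℝ => z ^ (-(1/γ))) atTop (nhds 0) :=
      tendsto_rpow_neg_atTop (by positivity)
    have h3 : Tendsto (fun z : ℝ =>
        -(C₁ * α₁) * z ^ (α₁-1) + z ^ (-(1/γ)) / K + -(y/κ)) atTop
        (nhds (-(C₁ * α₁) * 0 + 0 / K + -(y/κ))) :=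
      (((h1.const_mul _).add (h2.div_const K)).add_const _)
    have h4 : -(C₁ * α₁) * 0 + 0 / K + -(y/κ) = -(y/κ) := by ring
    rw [h4] at h3
    refine Tendsto.congr' ?_ h3
    filter_upwards [eventually_gt_atTop b] with z hz
    rw [hderiveq z (Set.mem_Ioi.mpr (hb0.trans hz)), if_pos hz]
    simp only [hf₁]; ring
  refine ⟨?_, hconv, hlim0, hliminf⟩
  intro z hz
  exact hderiv z hz
end

section
/- Let γ ∈ (0,1), m, ρ, r, l > 0, K > 0, κ > 0, and let y > 0 and x > −y/κ. Set D := 1/K + m·(l·r)^{(1-γ)/γ}·(ρ+m)^{-1/γ} and z* := ((y/κ + x)/D)^{-γ}. Then: (i) z* is the unique z > 0 satisfying D·z^{-1/γ} = y/κ + x (equivalently, ∂/∂z[Q̂^B(z,y) + ū(z)] = −x); (ii) the optimal consumption satisfies (z*)^{-1/γ} = (y/κ + x)/D; (iii) the optimal bequest satisfies (z*·(ρ+m)/r)^{-1/γ}·l^{(1-γ)/γ} = ((y/κ + x)/D)·((ρ+m)/r)^{-1/γ}·l^{(1-γ)/γ}; and (iv) Q̂^B(z*, y) + z*·x + ū(z*)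 = D^{γ}·(y/κ + x)^{1-γ}/(1-γ), where Q̂^B(z,y) = (γ/((1-γ)K))·z^{(γ-1)/γ} + z·y/κ and ū(z) = m·l^{(1-γ)/γ}·(γ/(1-γ))·r^{(1-γ)/γ}·(ρ+m)^{-1/γ}·z^{(γ-1)/γ}. -/
open Real

/-- The closed-form content of Theorem 4.6 (controlled bequest): with
`D := 1/K + m(lr)^{(1-γ)/γ}(ρ+m)^{-1/γ}` and `z* := ((y/κ+x)/D)^{-γ}`,
`z*` is the unique positive stationary point, the optimal consumption and bequest
have the stated closed forms, and the dual value at `z*` equals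
`D^γ (y/κ+x)^{1-γ}/(1-γ)`. -/
theorem stmt_15 (γ m ρ r l K κ y x D zs : ℝ) (hγ0 : 0 < γ) (hγ1 : γ < 1)
    (hm : 0 < m) (hρ : 0 < ρ) (hr : 0 < r) (hl : 0 < l)
    (hK : 0 < K) (hκ : 0 < κ) (hy : 0 < y) (hx : -(y/κ) < x)
    (hD : D = 1/K + m * (l*r) ^ ((1-γ)/γ) * (ρ+m) ^ (-(1/γ)))
    (hzs : zs = ((y/κ + x)/D) ^ (-γ)) :
    (0 < zs ∧ ∀ z : ℝ, 0 < z → (D * z ^ (-(1/γ)) = y/κ + x ↔ z = zs)) ∧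
    zs ^ (-(1/γ)) = (y/κ + x)/D ∧
    (zs * (ρ+m)/r) ^ (-(1/γ)) * l ^ ((1-γ)/γ)
      = ((y/κ + x)/D) * ((ρ+m)/r) ^ (-(1/γ)) * l ^ ((1-γ)/γ) ∧
    (γ/((1-γ)*K)) * zs ^ ((γ-1)/γ) + zs * y / κ + zs * x
      + m * l ^ ((1-γ)/γ) * (γ/(1-γ)) * r ^ ((1-γ)/γ) * (ρ+m) ^ (-(1/γ)) * zs ^ ((γ-1)/γ)
      = D ^ γ * (y/κ + x) ^ (1-γ) / (1-γ) := by
  have hγ0' : γ ≠ 0 := ne_of_gt hγ0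
  have hA : 0 < y/κ + x := by linarith
  have hD0 : 0 < D := by
    rw [hD]; positivity
  have hAD : 0 < (y/κ + x)/D := div_pos hA hD0
  have hzs0 : 0 < zs := hzs ▸ rpow_pos_of_pos hAD _
  have hexp1 : -γ * -(1/γ) = 1 := by field_simp
  have key : zs ^ (-(1/γ)) = (y/κ + x)/D := by
    rw [hzs, ← rpow_mul hAD.le, hexp1, rpow_one]
  refine ⟨⟨hzs0, fun z hz => ?_⟩, key, ?_, ?_⟩
  · constructor
    · intro h
      have hz1 : z ^ (-(1/γ)) = (y/κ + x)/D := by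
        rw [eq_div_iff hD0.ne', mul_comm]; exact h
      have hexp2 : -(1/γ) * -γ = 1 := by field_simp
      have hz2 : (z ^ (-(1/γ))) ^ (-γ) = z := by
        rw [← rpow_mul hz.le, hexp2, rpow_one]
      rw [hzs, ← hz1, hz2]
    · intro h
      rw [h, key, mul_div_cancel₀ _ hD0.ne']
  · have h1 : zs * (ρ+m)/r = zs * ((ρ+m)/r) := by ring
    rw [h1, Real.mul_rpow hzs0.le (by positivity), key]
  · have e1 : zs ^ ((γ-1)/γ) = ((y/κ + x)/D) ^ (1-γ) := by
      rw [hzs, ← rpow_mul hAD.le]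
      congr 1
      field_simp
      ring
    have e2 : zs * (y/κ + x) = D * ((y/κ + x)/D) ^ (1-γ) := by
      rw [hzs]
      have h1 : (1:ℝ) - γ = 1 + (-γ) := by ring
      rw [h1, rpow_add hAD, rpow_one]
      field_simp
    have e3 : D ^ γ * (y/κ + x) ^ (1-γ) = D * ((y/κ + x)/D) ^ (1-γ) := by
      have hDD : D ^ γ * D ^ (1-γ) = D := by
        rw [← rpow_add hD0]; norm_num
      rw [div_rpow hA.le hD0.le, mul_div_assoc', eq_div_iff (rpow_pos_of_pos hD0 (1-γ)).ne']
      linear_combination ((y/κ + x) ^ (1-γ)) * hDD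
    have hD'' : D = 1/K + m * (l ^ ((1-γ)/γ) * r ^ ((1-γ)/γ)) * (ρ+m) ^ (-(1/γ)) := by
      rw [hD, Real.mul_rpow hl.le hr.le]
    have hu : γ/(1-γ) + 1 = 1/(1-γ) := by
      have h1γ : (1:ℝ) - γ ≠ 0 := by linarith
      field_simp
      ring
    have hinv : ((1-γ)*K)⁻¹ = (1-γ)⁻¹ * K⁻¹ := mul_inv_rev (1-γ) K |>.trans (mul_comm _ _)
    rw [e1]
    linear_combination e2 - (1-γ)⁻¹ * e3 + (γ * ((y/κ + x)/D) ^ (1-γ)) * hinv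
      - (γ*(1-γ)⁻¹*((y/κ + x)/D) ^ (1-γ)) * hD''
      + (D * ((y/κ + x)/D) ^ (1-γ)) * hu
end

section
/- Let 0 < γ < 1 and q, l, m, r, ρ, z > 0. Set L̄ := q^{-γ}·l^{1-γ}·r/(ρ+m). Then the supremum over B ≥ 0 of F(B) := (m/(ρ+m))·(l(q+B))^{1-γ}/(1-γ) − z·m·B/r equals: m·l^{(1-γ)/γ}·(γ/(1-γ))·r^{(1-γ)/γ}·(ρ+m)^{-1/γ}·z^{(γ-1)/γ} + z·m·q/r if z < L̄, and (m/(ρ+m))·(lq)^{1-γ}/(1-γ) if z ≥ L̄. Moreover the supremum is attained at B₀* = (z(ρ+m)/r)^{-1/γ}·l^{(1-γ)/γ} − q when z < L̄, and at B₀* = 0 when z ≥ L̄. -/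
open Real Set

lemma my_tangent {p x x₀ : ℝ} (hp0 : 0 ≤ p) (hp1 : p ≤ 1) (hx : 0 ≤ x) (hx₀ : 0 < x₀) :
    x ^ p ≤ x₀ ^ p + p * x₀ ^ (p - 1) * (x - x₀) := by
  have hs : -1 ≤ x / x₀ - 1 := by
    have : 0 ≤ x / x₀ := div_nonneg hx hx₀.le
    linarith
  have h := rpow_one_add_le_one_add_mul_self hs hp0 hp1
  have e1 : 1 + (x / x₀ - 1) = x / x₀ := by ring
  rw [e1, Real.div_rpow hx hx₀.le] at h
  have hpos : (0:ℝ) < x₀ ^ p := Real.rpow_pos_of_pos hx₀ p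
  have h2 := mul_le_mul_of_nonneg_left h hpos.le
  have e2 : x₀ ^ p * (x ^ p / x₀ ^ p) = x ^ p := by field_simp
  have e3 : x₀ ^ (p - 1) = x₀ ^ p / x₀ := by rw [Real.rpow_sub hx₀, Real.rpow_one]
  have e4 : x₀ ^ p * (1 + p * (x / x₀ - 1)) = x₀ ^ p + p * (x₀ ^ p / x₀) * (x - x₀) := by
    field_simp
  rw [e2, e4, ← e3] at h2
  exact h2

set_option maxHeartbeats 1000000 in
/-- The dual bequest value with reserved inheritance `q` (Section 5.1.2):
`F(B) = (m/(ρ+m))(l(q+B))^{1-γ}/(1-γ) − zmB/r` on `[0,∞)` is maximized at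
`B₀* = (z(ρ+m)/r)^{-1/γ} l^{(1-γ)/γ} − q` with the stated value when `z < L̄`,
and at `B₀* = 0` with value `(m/(ρ+m))(lq)^{1-γ}/(1-γ)` when `z ≥ L̄`. -/
theorem stmt_16 (γ q l m r ρ z L : ℝ) (hγ0 : 0 < γ) (hγ1 : γ < 1)
    (hq : 0 < q) (hl : 0 < l) (hm : 0 < m) (hr : 0 < r) (hρ : 0 < ρ) (hz : 0 < z)
    (hL : L = q ^ (-γ) * l ^ (1-γ) * r / (ρ+m))
    (F : ℝ → ℝ)
    (hF : ∀ B : ℝ, F B = (m/(ρ+m)) * ((l*(q+B)) ^ (1-γ) / (1-γ)) - z*m*B/r) :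
    (z < L →
      (0:ℝ) ≤ (z*(ρ+m)/r) ^ (-(1/γ)) * l ^ ((1-γ)/γ) - q ∧
      IsMaxOn F (Set.Ici 0) ((z*(ρ+m)/r) ^ (-(1/γ)) * l ^ ((1-γ)/γ) - q) ∧
      F ((z*(ρ+m)/r) ^ (-(1/γ)) * l ^ ((1-γ)/γ) - q)
        = m * l ^ ((1-γ)/γ) * (γ/(1-γ)) * r ^ ((1-γ)/γ) * (ρ+m) ^ (-(1/γ)) * z ^ ((γ-1)/γ)
          + z*m*q/r) ∧
    (L ≤ z →
      IsMaxOn F (Set.Ici 0) 0 ∧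
      F 0 = (m/(ρ+m)) * ((l*q) ^ (1-γ) / (1-γ))) := by
  have hγm : 0 < 1 - γ := by linarith
  have hρm : 0 < ρ + m := by linarith
  set W : ℝ := z*(ρ+m)/r with hWdef
  have hW : 0 < W := by rw [hWdef]; positivity
  set A : ℝ := W ^ (-(1/γ)) * l ^ ((1-γ)/γ) with hAdef
  have hApos : 0 < A := by
    rw [hAdef]; positivity
  -- key algebraic identities
  have e : l * A = l ^ (1/γ) * W ^ (-(1/γ)) := by
    rw [hAdef, show l ^ (1/γ) = l ^ (1:ℝ) * l ^ ((1-γ)/γ) by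
      rw [← Real.rpow_add hl]; congr 1; field_simp; ring, Real.rpow_one]
    ring
  have hlA : (l*A) ^ (-γ) = W / l := by
    rw [e, Real.mul_rpow (by positivity) (by positivity), ← Real.rpow_mul hl.le,
      ← Real.rpow_mul hW.le,
      show (1/γ)*(-γ) = -1 by field_simp,
      show (-(1/γ))*(-γ) = 1 by field_simp,
      Real.rpow_neg_one, Real.rpow_one]
    rw [inv_mul_eq_div]
  have hbW : W ^ ((γ-1)/γ) = W * W ^ (-(1/γ)) := by
    rw [show (γ-1)/γ = 1 + (-(1/γ)) by field_simp; ring, Real.rpow_add hW, Real.rpow_one]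
  have hzm : z*m/r * W ^ (-(1/γ)) = (m/(ρ+m)) * W ^ ((γ-1)/γ) := by
    rw [hbW, hWdef]; field_simp
  have hlA1 : (l*A) ^ (1-γ) = l ^ ((1-γ)/γ) * W ^ ((γ-1)/γ) := by
    rw [e, Real.mul_rpow (by positivity) (by positivity), ← Real.rpow_mul hl.le,
      ← Real.rpow_mul hW.le,
      show (1/γ)*(1-γ) = (1-γ)/γ by field_simp,
      show (-(1/γ))*(1-γ) = (γ-1)/γ by field_simp; ring]
  have hsplit : W ^ ((γ-1)/γ) = z^((γ-1)/γ) * (ρ+m)^((γ-1)/γ) * r^((1-γ)/γ) := by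
    rw [hWdef, Real.div_rpow (by positivity) hr.le, Real.mul_rpow hz.le hρm.le,
      show (1-γ)/γ = -((γ-1)/γ) by ring, Real.rpow_neg hr.le, div_eq_mul_inv]
  have hpm : (ρ+m)^((γ-1)/γ) = (ρ+m) * (ρ+m)^(-(1/γ)) := by
    rw [show (γ-1)/γ = 1 + (-(1/γ)) by field_simp; ring, Real.rpow_add hρm, Real.rpow_one]
  have hfin : (m/(ρ+m)) * W^((γ-1)/γ) = m * r^((1-γ)/γ) * (ρ+m)^(-(1/γ)) * z^((γ-1)/γ) := by
    rw [hsplit, hpm]; field_simp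
  constructor
  · intro hlt
    -- z < L : positive bequest case
    have hzL : W < q^(-γ) * l^(1-γ) := by
      rw [hWdef, div_lt_iff₀ hr]
      rw [hL, lt_div_iff₀ hρm] at hlt
      linarith
    have hqA : q < A := by
      have h2 : (q^(-γ) * l^(1-γ)) ^ (-(1/γ)) < W ^ (-(1/γ)) := by
        apply Real.rpow_lt_rpow_of_neg hW hzL
        have : 0 < 1/γ := by positivity
        linarith
      have h3 : (q^(-γ) * l^(1-γ)) ^ (-(1/γ)) = q * l^(-((1-γ)/γ)) := by
        rw [Real.mul_rpow (by positivity) (by positivity), ← Real.rpow_mul hq.le,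
          ← Real.rpow_mul hl.le,
          show (-γ)*(-(1/γ)) = 1 by field_simp,
          show (1-γ)*(-(1/γ)) = -((1-γ)/γ) by field_simp, Real.rpow_one]
      rw [h3] at h2
      have h4 : q * l^(-((1-γ)/γ)) * l^((1-γ)/γ) = q := by
        rw [mul_assoc, ← Real.rpow_add hl]; simp
      calc q = q * l^(-((1-γ)/γ)) * l^((1-γ)/γ) := h4.symm
        _ < W ^ (-(1/γ)) * l^((1-γ)/γ) :=
            mul_lt_mul_of_pos_right h2 (Real.rpow_pos_of_pos hl _)
        _ = A := hAdef.symm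
    refine ⟨by linarith, ?_, ?_⟩
    · rw [isMaxOn_iff]
      intro B hB
      rw [mem_Ici] at hB
      rw [hF B, hF (A - q), show q + (A - q) = A by ring]
      have tan := my_tangent (p := 1-γ) (x := l*(q+B)) (x₀ := l*A) hγm.le (by linarith)
        (mul_nonneg hl.le (by linarith)) (by positivity)
      rw [show (1-γ) - 1 = -γ by ring, hlA] at tan
      calc (m/(ρ+m)) * ((l*(q+B))^(1-γ)/(1-γ)) - z*m*B/r
          ≤ (m/(ρ+m)) * (((l*A)^(1-γ) + (1-γ)*(W/l)*(l*(q+B) - l*A))/(1-γ)) - z*m*B/r := by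
            gcongr
        _ = (m/(ρ+m)) * ((l*A)^(1-γ)/(1-γ)) - z*m*(A-q)/r := by
            rw [hWdef]
            field_simp
            ring
    · rw [hF, show q + (A - q) = A by ring, hlA1]
      have hcA : z*m/r * A = (m/(ρ+m)) * (l^((1-γ)/γ) * W^((γ-1)/γ)) := by
        calc z*m/r * A = (z*m/r * W^(-(1/γ))) * l^((1-γ)/γ) := by rw [hAdef]; ring
          _ = ((m/(ρ+m)) * W^((γ-1)/γ)) * l^((1-γ)/γ) := by rw [hzm]
          _ = (m/(ρ+m)) * (l^((1-γ)/γ) * W^((γ-1)/γ)) := by ring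
      calc (m/(ρ+m)) * ((l^((1-γ)/γ) * W^((γ-1)/γ))/(1-γ)) - z*m*(A-q)/r
          = (m/(ρ+m)) * ((l^((1-γ)/γ) * W^((γ-1)/γ))/(1-γ)) - z*m/r*A + z*m*q/r := by ring
        _ = (m/(ρ+m)) * ((l^((1-γ)/γ) * W^((γ-1)/γ))/(1-γ))
              - (m/(ρ+m)) * (l^((1-γ)/γ) * W^((γ-1)/γ)) + z*m*q/r := by rw [hcA]
        _ = ((m/(ρ+m)) * W^((γ-1)/γ)) * (l^((1-γ)/γ) * (γ/(1-γ))) + z*m*q/r := by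
            field_simp; ring
        _ = (m * r^((1-γ)/γ) * (ρ+m)^(-(1/γ)) * z^((γ-1)/γ)) * (l^((1-γ)/γ) * (γ/(1-γ)))
              + z*m*q/r := by rw [hfin]
        _ = m * l^((1-γ)/γ) * (γ/(1-γ)) * r^((1-γ)/γ) * (ρ+m)^(-(1/γ)) * z^((γ-1)/γ)
              + z*m*q/r := by ring
  · intro hLz
    have hll : l^(-γ) * l = l^(1-γ) := by
      nth_rewrite 2 [← Real.rpow_one l]
      rw [← Real.rpow_add hl]
      congr 1; ring
    have hLm : (m/(ρ+m)) * (l*q)^(-γ) * l = m*L/r := by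
      rw [Real.mul_rpow hl.le hq.le, hL, ← hll]
      field_simp
    constructor
    · rw [isMaxOn_iff]
      intro B hB
      rw [mem_Ici] at hB
      rw [hF B, hF 0, show q + (0:ℝ) = q by ring]
      have tan := my_tangent (p := 1-γ) (x := l*(q+B)) (x₀ := l*q) hγm.le (by linarith)
        (mul_nonneg hl.le (by linarith)) (by positivity)
      rw [show (1-γ) - 1 = -γ by ring] at tan
      have h5 : m*L/r ≤ z*m/r := by
        rw [div_le_div_iff₀ hr hr]
        nlinarith [mul_le_mul_of_nonneg_right (mul_le_mul_of_nonneg_left hLz hm.le) hr.le]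
      have h6 := mul_le_mul_of_nonneg_right h5 hB
      calc (m/(ρ+m)) * ((l*(q+B))^(1-γ)/(1-γ)) - z*m*B/r
          ≤ (m/(ρ+m)) * (((l*q)^(1-γ) + (1-γ)*(l*q)^(-γ)*(l*(q+B) - l*q))/(1-γ)) - z*m*B/r := by
            gcongr
        _ = (m/(ρ+m)) * ((l*q)^(1-γ)/(1-γ)) + ((m/(ρ+m)) * (l*q)^(-γ) * l)*B - z*m*B/r := by
            field_simp; ring
        _ = (m/(ρ+m)) * ((l*q)^(1-γ)/(1-γ)) + (m*L/r)*B - z*m*B/r := by rw [hLm]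
        _ ≤ (m/(ρ+m)) * ((l*q)^(1-γ)/(1-γ)) - z*m*0/r := by
            rw [mul_zero, zero_div, sub_zero, show z*m*B/r = (z*m/r)*B by ring]
            linarith
    · rw [hF]
      norm_num
end

section
/- Let θ, ρ, m ∈ ℝ, r > 0, ρ + m > r, h > 0, and let α₁ < 0 be a root of (1/2)θ²α² + (ρ − r + m − (1/2)θ²)α − (ρ + m) = 0. Let A > 0 (in the paper, A = m·u(l·B̄) − m·u(q) with B̄ = B + q). Define b̄ := A·r·α₁/((ρ+m)·h·(α₁−1)), C̄₁ := −(h/(r·α₁))·b̄^{1−α₁}, and w̄(z) := C̄₁·z^{α₁} + h·z/r − A/(ρ+m) for z > 0. Then: (i) b̄ > 0 and C̄₁ > 0; (ii) w̄(b̄) = 0 and w̄'(b̄) = 0; (iii) for all z > 0, (1/2)θ²z²·w̄''(z) + (ρ−r+m)·z·w̄'(z) − (ρ+m)·w̄(z) = −h·z + A; (iv) w̄(z) ≥ 0 for all z ≥ b̄; and (v) h·z − A ≤ 0 for all z ∈ (0, b̄]. -/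
open Real

set_option maxHeartbeats 1000000 in
/-- Theorem 5.1 (predetermined bequest with reserved inheritance, constant mortality):
with `b̄ := Arα₁/((ρ+m)h(α₁−1))`, `C̄₁ := −(h/(rα₁)) b̄^{1−α₁}` and
`w̄(z) := C̄₁ z^{α₁} + hz/r − A/(ρ+m)`, one has `b̄ > 0`, `C̄₁ > 0`, smooth fit at `b̄`,
the ODE identity `(𝕃_Z − (ρ+m))w̄ = −hz + A` on `(0,∞)`, `w̄ ≥ 0` on `[b̄,∞)`, and
`hz − A ≤ 0` on `(0,b̄]`. -/
theorem stmt_18 (θ ρ m r h α₁ A b C₁ : ℝ) (hr : 0 < r) (hρm : r < ρ + m) (hh : 0 < h)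
    (hα : α₁ < 0)
    (hroot : 1/2 * θ^2 * α₁^2 + (ρ - r + m - 1/2 * θ^2) * α₁ - (ρ + m) = 0)
    (hA : 0 < A)
    (hb : b = A * r * α₁ / ((ρ + m) * h * (α₁ - 1)))
    (hC : C₁ = -(h/(r*α₁)) * b ^ (1 - α₁))
    (w : ℝ → ℝ) (hw : ∀ z : ℝ, w z = C₁ * z ^ α₁ + h * z / r - A / (ρ + m)) :
    (0 < b ∧ 0 < C₁) ∧
    (w b = 0 ∧ deriv w b = 0) ∧
    (∀ z : ℝ, 0 < z →
      1/2 * θ^2 * z^2 * deriv (deriv w) z + (ρ - r + m) * z * deriv w z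
        - (ρ + m) * w z = -h * z + A) ∧
    (∀ z : ℝ, b ≤ z → 0 ≤ w z) ∧
    (∀ z : ℝ, 0 < z → z ≤ b → h * z - A ≤ 0) := by
  have hwf : w = fun z : ℝ => C₁ * z ^ α₁ + h * z / r - A / (ρ + m) := funext hw
  subst hwf
  have hpm : 0 < ρ + m := hr.trans hρm
  have hα0 : α₁ ≠ 0 := ne_of_lt hα
  have hα1 : α₁ - 1 < 0 := by linarith
  have hb0 : 0 < b := by
    rw [hb]
    exact div_pos_of_neg_of_neg (mul_neg_of_pos_of_neg (mul_pos hA hr) hα)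
      (mul_neg_of_pos_of_neg (mul_pos hpm hh) (by linarith))
  have hC1 : 0 < C₁ := by
    rw [hC]
    have h1 : h / (r * α₁) < 0 := div_neg_of_pos_of_neg hh (by nlinarith)
    have h2 : (0:ℝ) < b ^ (1 - α₁) := Real.rpow_pos_of_pos hb0 _
    nlinarith
  -- derivative
  have hd : ∀ z : ℝ, 0 < z →
      HasDerivAt (fun z : ℝ => C₁ * z ^ α₁ + h * z / r - A / (ρ + m))
        (C₁ * (α₁ * z ^ (α₁ - 1)) + h / r) z := by
    intro z hz
    have h1 := (Real.hasDerivAt_rpow_const (p := α₁) (Or.inl hz.ne')).const_mul C₁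
    have h2 : HasDerivAt (fun z : ℝ => h * z / r) (h / r) z := by
      simpa using ((hasDerivAt_id z).const_mul h).div_const r
    simpa using (h1.add h2).sub_const (A / (ρ + m))
  have hderiv : ∀ z : ℝ, 0 < z →
      deriv (fun z : ℝ => C₁ * z ^ α₁ + h * z / r - A / (ρ + m)) z
        = C₁ * (α₁ * z ^ (α₁ - 1)) + h / r := fun z hz => (hd z hz).deriv
  have hderiv2 : ∀ z : ℝ, 0 < z →
      deriv (deriv (fun z : ℝ => C₁ * z ^ α₁ + h * z / r - A / (ρ + m))) z
        = C₁ * α₁ * (α₁ - 1) * z ^ (α₁ - 2) := by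
    intro z hz
    have hev : deriv (fun z : ℝ => C₁ * z ^ α₁ + h * z / r - A / (ρ + m))
        =ᶠ[nhds z] fun y => C₁ * (α₁ * y ^ (α₁ - 1)) + h / r := by
      filter_upwards [isOpen_Ioi.mem_nhds (Set.mem_Ioi.mpr hz)] with y hy
      exact hderiv y hy
    rw [hev.deriv_eq]
    have h1 := ((Real.hasDerivAt_rpow_const (p := α₁ - 1) (Or.inl hz.ne')).const_mul
      (C₁ * α₁)).add_const (h / r)
    have h2 : HasDerivAt (fun y : ℝ => C₁ * (α₁ * y ^ (α₁ - 1)) + h / r)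
        (C₁ * α₁ * (α₁ - 1) * z ^ (α₁ - 2)) z := by
      have e : α₁ - 2 = α₁ - 1 - 1 := by ring
      rw [e]
      have hf : (fun y : ℝ => C₁ * (α₁ * y ^ (α₁ - 1)) + h / r)
          = (fun x : ℝ => C₁ * α₁ * x ^ (α₁ - 1) + h / r) := by
        funext y; ring
      rw [hf]
      exact h1.congr_deriv (by ring)
    exact h2.deriv
  have hne : (ρ + m) ≠ 0 := hpm.ne'
  have hα1ne : α₁ - 1 ≠ 0 := ne_of_lt hα1
  have key1 : b ^ (1 - α₁) * b ^ α₁ = b := by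
    rw [← Real.rpow_add hb0]; norm_num
  have key2 : b ^ (1 - α₁) * b ^ (α₁ - 1) = 1 := by
    rw [← Real.rpow_add hb0]; norm_num
  have hwb : C₁ * b ^ α₁ + h * b / r - A / (ρ + m) = 0 := by
    rw [hC, mul_assoc, key1, hb]
    field_simp
    ring
  have mono : MonotoneOn (fun z : ℝ => C₁ * z ^ α₁ + h * z / r - A / (ρ + m)) (Set.Ici b) := by
    apply monotoneOn_of_deriv_nonneg (convex_Ici b)
    · intro x hx
      exact (hd x (lt_of_lt_of_le hb0 hx)).continuousAt.continuousWithinAt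
    · intro x hx
      rw [interior_Ici] at hx
      exact (hd x (lt_trans hb0 hx)).differentiableAt.differentiableWithinAt
    · intro x hx
      rw [interior_Ici] at hx
      have hxb : b < x := hx
      have hx' : 0 < x := lt_trans hb0 hxb
      rw [hderiv x hx']
      have hCα : C₁ * (α₁ * x ^ (α₁ - 1)) = -(h / r) * (b ^ (1 - α₁) * x ^ (α₁ - 1)) := by
        rw [hC]; field_simp
      rw [hCα]
      have hle : x ^ (α₁ - 1) ≤ b ^ (α₁ - 1) :=
        Real.rpow_le_rpow_of_nonpos hb0 hxb.le (by linarith)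
      have hbp : (0:ℝ) < b ^ (1 - α₁) := Real.rpow_pos_of_pos hb0 _
      have h1 : b ^ (1 - α₁) * x ^ (α₁ - 1) ≤ 1 := by
        calc b ^ (1 - α₁) * x ^ (α₁ - 1) ≤ b ^ (1 - α₁) * b ^ (α₁ - 1) := by nlinarith
          _ = 1 := key2
      have hhr : 0 < h / r := div_pos hh hr
      nlinarith
  refine ⟨⟨hb0, hC1⟩, ⟨hwb, ?_⟩, ?_, ?_, ?_⟩
  · -- deriv w b = 0
    rw [hderiv b hb0, hC]
    have e : -(h / (r * α₁)) * b ^ (1 - α₁) * (α₁ * b ^ (α₁ - 1)) + h / r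
        = -(h / (r * α₁)) * α₁ * (b ^ (1 - α₁) * b ^ (α₁ - 1)) + h / r := by ring
    rw [e, key2]
    field_simp
    ring
  · -- ODE
    intro z hz
    rw [hderiv2 z hz, hderiv z hz]
    show 1/2 * θ^2 * z^2 * (C₁ * α₁ * (α₁ - 1) * z ^ (α₁ - 2))
        + (ρ - r + m) * z * (C₁ * (α₁ * z ^ (α₁ - 1)) + h / r)
        - (ρ + m) * (C₁ * z ^ α₁ + h * z / r - A / (ρ + m)) = -h * z + A
    have e1 : z ^ (α₁ - 1) * z = z ^ α₁ := by
      rw [← Real.rpow_add_one hz.ne']; norm_num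
    have e2 : z ^ (α₁ - 2) * z = z ^ (α₁ - 1) := by
      rw [← Real.rpow_add_one hz.ne']
      congr 1
      ring
    have hAe : (ρ + m) * (A / (ρ + m)) = A := by field_simp
    have hinv : r * r⁻¹ = 1 := mul_inv_cancel₀ hr.ne'
    rw [← e1, ← e2]
    linear_combination (C₁ * z ^ (α₁ - 2) * z ^ 2) * hroot + hAe - (h * z) * hinv
  · -- w ≥ 0 on [b, ∞)
    intro z hzb
    have h2 := mono Set.self_mem_Ici (Set.mem_Ici.mpr hzb) hzb
    dsimp only at h2
    show (0:ℝ) ≤ C₁ * z ^ α₁ + h * z / r - A / (ρ + m)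
    linarith [hwb, h2]
  · -- h z - A ≤ 0 on (0, b]
    intro z hz0 hzb
    have heq : h * b * ((ρ + m) * (α₁ - 1)) = A * (r * α₁) := by
      rw [hb]; field_simp
    have hneg : (ρ + m) * (α₁ - 1) < 0 := mul_neg_of_pos_of_neg hpm hα1
    have h4 : (ρ + m) * (α₁ - 1) - r * α₁ < 0 := by nlinarith [mul_neg_of_neg_of_pos hα (show (0:ℝ) < ρ + m - r by linarith)]
    have hbA : h * b ≤ A := by
      by_contra hcon
      push_neg at hcon
      have h3 : 0 < (A - h * b) * ((ρ + m) * (α₁ - 1)) :=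
        mul_pos_of_neg_of_neg (by linarith) hneg
      have h5 : (A - h * b) * ((ρ + m) * (α₁ - 1)) = A * ((ρ + m) * (α₁ - 1) - r * α₁) := by
        linear_combination -heq
      rw [h5] at h3
      have h7 := mul_neg_of_pos_of_neg hA h4
      linarith
    linarith [mul_le_mul_of_nonneg_left hzb hh.le]
end
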